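/- arXiv:1005.0440 — 2 statements merged into one kernel-verified Lean document; each statement's English description precedes it below -/
import Mathlib

section
/- Let h > 0 and α ≠ 0. Given any sampled classic PI controller with gains k_p, k_i such that k_p = −1/(α·h), there exists a unique K_P (namely K_P = α·h·k_i) so that the sampled i-P with parameters (α, K_P) produces the same control recursion; conversely if k_p ≠ −1/(α·h), no choice of K_P makes the two recursions agree for all error sequences. -/
theorem stmt_15 (h α k_p k_i : ℝ) (hh : 0 < h) (hα : α ≠ 0) :
    (k_p = -1 / (α * h) →
      ∃! K_P : ℝ, K_P = α * h * k_i ∧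
        ∀ (e : ℕ → ℝ) (uprev : ℝ) (n : ℕ), 1 ≤ n →
          uprev + k_p * (e n - e (n - 1)) + k_i * h * e n
            = uprev - (e n - e (n - 1)) / (h * α) + (K_P / α) * e n) ∧
    (k_p ≠ -1 / (α * h) →
      ∀ K_P : ℝ, ¬ (∀ (e : ℕ → ℝ) (uprev : ℝ) (n : ℕ), 1 ≤ n →
          uprev + k_p * (e n - e (n - 1)) + k_i * h * e n
            = uprev - (e n - e (n - 1)) / (h * α) + (K_P / α) * e n)) := by
  have hh' : h ≠ 0 := ne_of_gt hh
  constructor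
  · intro hk
    refine ⟨α * h * k_i, ⟨rfl, ?_⟩, fun y hy => hy.1⟩
    intro e uprev n hn
    subst hk
    field_simp
    ring
  · intro hk K_P hall
    have := hall (fun m => if m = 0 then 1 else 0) 0 1 le_rfl
    simp at this
    apply hk
    field_simp at this ⊢
    linarith
end

section
/- Let α ≠ 0, h > 0, K_P ∈ ℝ with |1 + h·K_P| < 1, and let the closed loop consist of the plant (y(n+1) − y(n))/h = F(n) + α·u(n) and the i-P controller using the delayed estimate F̂(n) = (y(n) − y(n−1))/h − α·u(n−1). Then the tracking error satisfies e(n+1) = (1 + h·K_P)·e(n) + h·(F(n) − F(n−1)); consequently, if |F(n) − F(n−1)| ≤ δ for all n, then limsup_{n→∞} |e(n)| ≤ h·δ/(1 − |1 + h·K_P|). -/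
open Filter

theorem stmt_19 (α h K_P : ℝ) (hα : α ≠ 0) (hh : 0 < h)
    (hstab : |1 + h * K_P| < 1)
    (y ystar u F Fhat : ℕ → ℝ)
    (hplant : ∀ n : ℕ, (y (n + 1) - y n) / h = F n + α * u n)
    (hFhat : ∀ n : ℕ, 1 ≤ n →
      Fhat n = (y n - y (n - 1)) / h - α * u (n - 1))
    (hctrl : ∀ n : ℕ, 1 ≤ n → u n = (1 / α) *
      (-Fhat n + (ystar (n + 1) - ystar n) / h + K_P * (y n - ystar n))) :
    (∀ n : ℕ, 1 ≤ n →
      y (n + 1) - ystar (n + 1)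
        = (1 + h * K_P) * (y n - ystar n) + h * (F n - F (n - 1))) ∧
    (∀ δ : ℝ, (∀ n : ℕ, |F (n + 1) - F n| ≤ δ) →
      Filter.limsup (fun n : ℕ => |y n - ystar n|) atTop
        ≤ h * δ / (1 - |1 + h * K_P|)) := by
  have hhne : h ≠ 0 := ne_of_gt hh
  have key : ∀ n : ℕ, 1 ≤ n →
      y (n + 1) - ystar (n + 1)
        = (1 + h * K_P) * (y n - ystar n) + h * (F n - F (n - 1)) := by
    intro n hn
    obtain ⟨m, rfl⟩ : ∃ m, n = m + 1 := ⟨n - 1, by omega⟩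
    have hp1 := hplant (m + 1)
    have hp0 := hplant m
    have hf := hFhat (m + 1) (by omega)
    have hc := hctrl (m + 1) (by omega)
    simp only [Nat.add_sub_cancel] at hf hc ⊢
    have hFe : Fhat (m + 1) = F m := by rw [hf, hp0]; ring
    rw [hFe] at hc
    rw [hc] at hp1
    field_simp at hp1
    have hgoal : (y (m + 1 + 1) - ystar (m + 1 + 1)) * (α * h)
        = ((1 + h * K_P) * (y (m + 1) - ystar (m + 1)) + h * (F (m + 1) - F m)) * (α * h) := by
      linear_combination (α * h) * hp1
    exact mul_right_cancel₀ (mul_ne_zero hα hhne) hgoal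
  refine ⟨key, ?_⟩
  intro δ hδ
  set ρ := |1 + h * K_P| with hρ
  have hρ0 : 0 ≤ ρ := abs_nonneg _
  have hδ0 : 0 ≤ δ := le_trans (abs_nonneg _) (hδ 0)
  set M := h * δ / (1 - ρ) with hM
  have hM0 : 0 ≤ M := div_nonneg (by positivity) (by linarith)
  have h1ρ : (1 : ℝ) - ρ ≠ 0 := by linarith
  have hMe : ρ * M + h * δ = M := by
    rw [hM]
    field_simp
    ring
  have step : ∀ n : ℕ, 1 ≤ n →
      |y (n + 1) - ystar (n + 1)| ≤ ρ * |y n - ystar n| + h * δ := by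
    intro n hn
    rw [key n hn]
    obtain ⟨m, rfl⟩ : ∃ m, n = m + 1 := ⟨n - 1, by omega⟩
    simp only [Nat.add_sub_cancel]
    calc |(1 + h * K_P) * (y (m+1) - ystar (m+1)) + h * (F (m+1) - F m)|
        ≤ |(1 + h * K_P) * (y (m+1) - ystar (m+1))| + |h * (F (m+1) - F m)| := abs_add_le _ _
      _ = ρ * |y (m+1) - ystar (m+1)| + h * |F (m+1) - F m| := by
          rw [abs_mul, abs_mul, abs_of_pos hh]
      _ ≤ ρ * |y (m+1) - ystar (m+1)| + h * δ := by
          have := hδ m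
          nlinarith
  have bound : ∀ k : ℕ, |y (1 + k) - ystar (1 + k)| ≤ ρ ^ k * |y 1 - ystar 1| + M := by
    intro k
    induction k with
    | zero => simp [hM0]
    | succ k ih =>
        have h1 : (1 + (k + 1)) = (1 + k) + 1 := by omega
        rw [h1]
        calc |y ((1+k)+1) - ystar ((1+k)+1)| ≤ ρ * |y (1+k) - ystar (1+k)| + h * δ :=
              step (1+k) (by omega)
          _ ≤ ρ * (ρ ^ k * |y 1 - ystar 1| + M) + h * δ := by nlinarith
          _ = ρ ^ (k+1) * |y 1 - ystar 1| + (ρ * M + h * δ) := by ring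
          _ = ρ ^ (k+1) * |y 1 - ystar 1| + M := by rw [hMe]
  -- limsup bound
  have hg : Tendsto (fun n : ℕ => ρ ^ (n - 1) * |y 1 - ystar 1| + M) atTop (nhds M) := by
    have h0 : Tendsto (fun n : ℕ => ρ ^ (n - 1)) atTop (nhds 0) :=
      (tendsto_pow_atTop_nhds_zero_of_lt_one hρ0 hstab).comp (tendsto_sub_atTop_nat 1)
    have := (h0.mul_const (|y 1 - ystar 1|)).add_const M
    simpa using this
  have hle : ∀ᶠ n : ℕ in atTop, |y n - ystar n| ≤ ρ ^ (n - 1) * |y 1 - ystar 1| + M := by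
    filter_upwards [eventually_ge_atTop 1] with n hn
    have := bound (n - 1)
    have h1 : 1 + (n - 1) = n := by omega
    rwa [h1] at this
  calc Filter.limsup (fun n : ℕ => |y n - ystar n|) atTop
      ≤ Filter.limsup (fun n : ℕ => ρ ^ (n - 1) * |y 1 - ystar 1| + M) atTop := by
        exact limsup_le_limsup hle
          (isCoboundedUnder_le_of_le atTop fun n => abs_nonneg _)
          hg.isBoundedUnder_le
    _ = M := hg.limsup_eq
end
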